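/- Consider two disjoint finite vertex sets: V_{ES} (the epitope together with the shadow paratope V_S ⊆ V_{ES}) and V_A (the antibody, with native paratope V_P ⊆ V_A), together with a bijection σ : V_S → V_P. Each graph has its own neighborhoods (neighbors of a vertex lie in its own vertex set), channel sizes c(i) ≤ C with c(i) = c(σ(i)) for i ∈ V_S, hidden states h(i) ∈ ℝ^{d'}, and coordinates X(i) ∈ ℝ^{3×c(i)}. The L-layer alternating encoder repeats, for l = 1, …, L (with arbitrary, possibly layer-specific, functions φ_m, φ_x, φ_h): apply one message-passing layer (Eqs. m_{ij}, X_{ij}, h', X' built from T_R and T_S as in the adaptive multi-channel encoder) to the graph on V_A; set h(i) := h(σ(i)) for all i ∈ V_S; apply one message-passing layer to the graph on V_{ES}; set h(σ(i)) := h(i) for all i ∈ V_S. Then the encoder is independently E(3)-equivariant with respect to V_{ES} and V_A: for any orthogonal matrices Q₁, Q₂ ∈ O(3) and translations t₁, t₂ ∈ ℝ³, if the input coordinates on V_{ES} are replaced by Q₁ X(i) + t₁ 1ᵀ and the input coordinates on V_A by Q₂ X(i) + t₂ 1ᵀ, then all final hidden states are unchanged, the final coordinates on V_{ES} are replaced by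 Q₁ X_final(i) + t₁ 1ᵀ, and the final coordinates on V_A are replaced by Q₂ X_final(i) + t₂ 1ᵀ. -/
import Mathlib


open Matrix BigOperators

attribute [local instance] Classical.propDecidable

noncomputable section

/-- Euclidean distance between the `p`-th column of `X` and the `q`-th column of `Y`. -/
def colDist {ci cj : ℕ} (X : Matrix (Fin 3) (Fin ci) ℝ) (Y : Matrix (Fin 3) (Fin cj) ℝ)
    (p : Fin ci) (q : Fin cj) : ℝ :=
  Real.sqrt (∑ r : Fin 3, (X r p - Y r q) ^ 2)

/-- Rigid (Euclidean) action `g·X = QX + t1ᵀ`, acting columnwise by `x ↦ Qx + t`. -/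
def rigid {c : ℕ} (Q : Matrix (Fin 3) (Fin 3) ℝ) (t : Fin 3 → ℝ)
    (X : Matrix (Fin 3) (Fin c) ℝ) : Matrix (Fin 3) (Fin c) ℝ :=
  Matrix.of fun r p => (∑ s : Fin 3, Q r s * X s p) + t r

/-- Geometric relation extractor `T_R(X_i, X_j) = A_iᵀ ((w_i w_jᵀ) ⊙ D(X_i, X_j)) A_j`. -/
def TR {ci cj d : ℕ} (Ai : Matrix (Fin ci) (Fin d) ℝ) (Aj : Matrix (Fin cj) (Fin d) ℝ)
    (wi : Fin ci → ℝ) (wj : Fin cj → ℝ)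
    (X : Matrix (Fin 3) (Fin ci) ℝ) (Y : Matrix (Fin 3) (Fin cj) ℝ) :
    Matrix (Fin d) (Fin d) ℝ :=
  Aiᵀ * (Matrix.of fun p q => wi p * wj q * colDist X Y p q) * Aj

/-- Frobenius norm of a real matrix. -/
def frob {n m : ℕ} (M : Matrix (Fin n) (Fin m) ℝ) : ℝ :=
  Real.sqrt (∑ i : Fin n, ∑ j : Fin m, (M i j) ^ 2)

/-- Average pooling of `s ∈ ℝ^C` with window size `C − c + 1` and stride 1. -/
def avgPool {c C : ℕ} (hc : c ≤ C) (s : Fin C → ℝ) : Fin c → ℝ :=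
  fun k => (∑ m : Fin (C - c + 1), s ⟨k.val + m.val, by omega⟩) / ((C - c + 1 : ℕ) : ℝ)

/-- Geometric message scaler `T_S(X, s) = X · diag(s')`. -/
def TS {c C : ℕ} (hc : c ≤ C) (X : Matrix (Fin 3) (Fin c) ℝ) (s : Fin C → ℝ) :
    Matrix (Fin 3) (Fin c) ℝ :=
  Matrix.of fun r p => X r p * avgPool hc s p

/-- The per-vertex parameters and topology of one graph: attribute matrices `A_i`,
channel weights `w_i`, neighborhoods `N`, and the channel-size bound `c(i) ≤ C`. -/
structure GraphParams (V : Type*) (d m' C : ℕ) (c : V → ℕ) where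
  A : (i : V) → Matrix (Fin (c i)) (Fin d) ℝ
  w : (i : V) → Fin (c i) → ℝ
  N : V → Finset V
  hC : ∀ i, c i ≤ C

/-- The (arbitrary) functions `φ_m`, `φ_x`, `φ_h` of one message-passing layer. -/
structure LayerFuns (d dh m' C : ℕ) where
  φm : (Fin dh → ℝ) → (Fin dh → ℝ) → Matrix (Fin d) (Fin d) ℝ → (Fin m' → ℝ)
  φx : (Fin m' → ℝ) → (Fin C → ℝ)
  φh : (Fin dh → ℝ) → (Fin m' → ℝ) → (Fin dh → ℝ)

variable {V : Type*} {d dh m' C : ℕ}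

/-- Non-geometric message `m_{ij}`. -/
def msgOf {c : V → ℕ} (G : GraphParams V d m' C c) (F : LayerFuns d dh m' C)
    (h : V → Fin dh → ℝ) (X : (i : V) → Matrix (Fin 3) (Fin (c i)) ℝ)
    (i j : V) : Fin m' → ℝ :=
  F.φm (h i) (h j)
    ((frob (TR (G.A i) (G.A j) (G.w i) (G.w j) (X i) (X j)) + 1)⁻¹ •
      TR (G.A i) (G.A j) (G.w i) (G.w j) (X i) (X j))

/-- Geometric message `X_{ij} = T_S(X_i − μ_j 1ᵀ, φ_x(m_{ij}))`. -/
def xMsgOf {c : V → ℕ} (G : GraphParams V d m' C c) (F : LayerFuns d dh m' C)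
    (h : V → Fin dh → ℝ) (X : (i : V) → Matrix (Fin 3) (Fin (c i)) ℝ)
    (i j : V) : Matrix (Fin 3) (Fin (c i)) ℝ :=
  TS (G.hC i) (Matrix.of fun r p => X i r p - (∑ q : Fin (c j), X j r q) / ((c j : ℕ) : ℝ))
    (F.φx (msgOf G F h X i j))

/-- Hidden-state update `h'(i) = φ_h(h(i), Σ_{j ∈ N(i)} m_{ij})`. -/
def hOut {c : V → ℕ} (G : GraphParams V d m' C c) (F : LayerFuns d dh m' C)
    (h : V → Fin dh → ℝ) (X : (i : V) → Matrix (Fin 3) (Fin (c i)) ℝ)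
    (i : V) : Fin dh → ℝ :=
  F.φh (h i) (∑ j ∈ G.N i, msgOf G F h X i j)

/-- Coordinate update `X'(i) = X(i) + (1/|N(i)|) Σ_{j ∈ N(i)} X_{ij}`. -/
def xOut {c : V → ℕ} (G : GraphParams V d m' C c) (F : LayerFuns d dh m' C)
    (h : V → Fin dh → ℝ) (X : (i : V) → Matrix (Fin 3) (Fin (c i)) ℝ)
    (i : V) : Matrix (Fin 3) (Fin (c i)) ℝ :=
  X i + (((G.N i).card : ℝ))⁻¹ • ∑ j ∈ G.N i, xMsgOf G F h X i j

/-- The full state of the encoder: hidden states and coordinates of the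
epitope-with-shadow-paratope graph (`E`) and of the antibody graph (`A`). -/
structure EncState (VE VA : Type*) (dh : ℕ) (cE : VE → ℕ) (cA : VA → ℕ) where
  hE : VE → Fin dh → ℝ
  hA : VA → Fin dh → ℝ
  XE : (i : VE) → Matrix (Fin 3) (Fin (cE i)) ℝ
  XA : (j : VA) → Matrix (Fin 3) (Fin (cA j)) ℝ

variable {VE VA ιS : Type*}

/-- Copy the hidden states of the native paratope onto the shadow paratope:
`h(eS k) := hA(eP k)`. -/
def copyToShadow (eS : ιS → VE) (eP : ιS → VA)
    (hE : VE → Fin dh → ℝ) (hA : VA → Fin dh → ℝ) : VE → Fin dh → ℝ :=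
  fun i => if hk : ∃ k, eS k = i then hA (eP (Classical.choose hk)) else hE i

/-- Copy the hidden states of the shadow paratope back onto the native paratope:
`h(eP k) := hE(eS k)`. -/
def copyToNative (eS : ιS → VE) (eP : ιS → VA)
    (hE : VE → Fin dh → ℝ) (hA : VA → Fin dh → ℝ) : VA → Fin dh → ℝ :=
  fun j => if hk : ∃ k, eP k = j then hE (eS (Classical.choose hk)) else hA j

/-- One round of the alternating encoder: a message-passing layer on the antibody graph,
sharing of hidden states to the shadow paratope, a message-passing layer on the
epitope graph, and sharing of hidden states back to the native paratope. -/
def encStep {cE : VE → ℕ} {cA : VA → ℕ}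
    (GE : GraphParams VE d m' C cE) (GA : GraphParams VA d m' C cA)
    (eS : ιS → VE) (eP : ιS → VA)
    (FE FA : ℕ → LayerFuns d dh m' C) (l : ℕ)
    (st : EncState VE VA dh cE cA) : EncState VE VA dh cE cA :=
  let hA1 := fun j => hOut GA (FA l) st.hA st.XA j
  let XA1 := fun j => xOut GA (FA l) st.hA st.XA j
  let hE1 := copyToShadow eS eP st.hE hA1
  let hE2 := fun i => hOut GE (FE l) hE1 st.XE i
  let XE1 := fun i => xOut GE (FE l) hE1 st.XE i
  let hA2 := copyToNative eS eP hE2 hA1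
  ⟨hE2, hA2, XE1, XA1⟩

/-- The `L`-layer alternating encoder. -/
def encoder {cE : VE → ℕ} {cA : VA → ℕ}
    (GE : GraphParams VE d m' C cE) (GA : GraphParams VA d m' C cA)
    (eS : ιS → VE) (eP : ιS → VA)
    (FE FA : ℕ → LayerFuns d dh m' C) :
    ℕ → EncState VE VA dh cE cA → EncState VE VA dh cE cA
  | 0, st => st
  | l + 1, st => encoder GE GA eS eP FE FA l (encStep GE GA eS eP FE FA l st)

/-- Left multiplication by `Q` (the linear part of a rigid motion). -/
def mulQ {c : ℕ} (Q : Matrix (Fin 3) (Fin 3) ℝ) (X : Matrix (Fin 3) (Fin c) ℝ) :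
    Matrix (Fin 3) (Fin c) ℝ :=
  Matrix.of fun r p => ∑ s : Fin 3, Q r s * X s p

lemma orth_sum {Q : Matrix (Fin 3) (Fin 3) ℝ} (hQ : Qᵀ * Q = 1) (v : Fin 3 → ℝ) :
    ∑ r : Fin 3, (∑ s : Fin 3, Q r s * v s) ^ 2 = ∑ s : Fin 3, (v s) ^ 2 := by
  have h : ∀ s s' : Fin 3, ∑ r : Fin 3, Q r s * Q r s' = if s = s' then 1 else 0 := by
    intro s s'
    have := congrFun (congrFun hQ s) s'
    simpa [Matrix.mul_apply, Matrix.transpose_apply, Matrix.one_apply] using this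
  calc ∑ r : Fin 3, (∑ s, Q r s * v s) ^ 2
      = ∑ r : Fin 3, ∑ s : Fin 3, ∑ s' : Fin 3, (Q r s * v s) * (Q r s' * v s') := by
        simp [sq, Finset.sum_mul_sum]
    _ = ∑ s : Fin 3, ∑ s' : Fin 3, (∑ r : Fin 3, Q r s * Q r s') * (v s * v s') := by
        rw [Finset.sum_comm]
        refine Finset.sum_congr rfl fun s _ => ?_
        rw [Finset.sum_comm]
        refine Finset.sum_congr rfl fun s' _ => ?_
        rw [Finset.sum_mul]
        exact Finset.sum_congr rfl fun r _ => by ring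
    _ = ∑ s : Fin 3, (v s) ^ 2 := by
        simp [h, ite_mul, sq]

lemma colDist_rigid {ci cj : ℕ} {Q : Matrix (Fin 3) (Fin 3) ℝ} (hQ : Qᵀ * Q = 1)
    (t : Fin 3 → ℝ) (X : Matrix (Fin 3) (Fin ci) ℝ) (Y : Matrix (Fin 3) (Fin cj) ℝ)
    (p : Fin ci) (q : Fin cj) :
    colDist (rigid Q t X) (rigid Q t Y) p q = colDist X Y p q := by
  unfold colDist rigid
  congr 1
  have : ∀ r : Fin 3,
      ((∑ s : Fin 3, Q r s * X s p) + t r) - ((∑ s : Fin 3, Q r s * Y s q) + t r)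
      = ∑ s : Fin 3, Q r s * (X s p - Y s q) := by
    intro r
    rw [Finset.sum_congr rfl (fun s _ => mul_sub (Q r s) (X s p) (Y s q)),
      Finset.sum_sub_distrib]
    ring
  calc ∑ r : Fin 3, (Matrix.of _ r p - Matrix.of _ r q) ^ 2
      = ∑ r : Fin 3, (∑ s : Fin 3, Q r s * (X s p - Y s q)) ^ 2 := by
        refine Finset.sum_congr rfl fun r _ => ?_
        rw [Matrix.of_apply, Matrix.of_apply, this r]
    _ = ∑ s : Fin 3, (X s p - Y s q) ^ 2 := orth_sum hQ _

lemma TR_rigid {ci cj d : ℕ} {Q : Matrix (Fin 3) (Fin 3) ℝ} (hQ : Qᵀ * Q = 1)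
    (t : Fin 3 → ℝ) (Ai : Matrix (Fin ci) (Fin d) ℝ) (Aj : Matrix (Fin cj) (Fin d) ℝ)
    (wi : Fin ci → ℝ) (wj : Fin cj → ℝ)
    (X : Matrix (Fin 3) (Fin ci) ℝ) (Y : Matrix (Fin 3) (Fin cj) ℝ) :
    TR Ai Aj wi wj (rigid Q t X) (rigid Q t Y) = TR Ai Aj wi wj X Y := by
  unfold TR
  congr 1
  congr 1
  ext p q
  rw [Matrix.of_apply, Matrix.of_apply, colDist_rigid hQ]

lemma msgOf_rigid {V : Type*} {d dh m' C : ℕ} {c : V → ℕ}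
    (G : GraphParams V d m' C c) (F : LayerFuns d dh m' C)
    (h : V → Fin dh → ℝ) (X : (i : V) → Matrix (Fin 3) (Fin (c i)) ℝ)
    {Q : Matrix (Fin 3) (Fin 3) ℝ} (hQ : Qᵀ * Q = 1) (t : Fin 3 → ℝ) (i j : V) :
    msgOf G F h (fun i => rigid Q t (X i)) i j = msgOf G F h X i j := by
  unfold msgOf
  rw [TR_rigid hQ]

lemma hOut_rigid {V : Type*} {d dh m' C : ℕ} {c : V → ℕ}
    (G : GraphParams V d m' C c) (F : LayerFuns d dh m' C)
    (h : V → Fin dh → ℝ) (X : (i : V) → Matrix (Fin 3) (Fin (c i)) ℝ)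
    {Q : Matrix (Fin 3) (Fin 3) ℝ} (hQ : Qᵀ * Q = 1) (t : Fin 3 → ℝ) (i : V) :
    hOut G F h (fun i => rigid Q t (X i)) i = hOut G F h X i := by
  unfold hOut
  exact congrArg (F.φh (h i)) (Finset.sum_congr rfl fun j _ => msgOf_rigid G F h X hQ t i j)

lemma sub_mean_rigid {ci cj : ℕ} (Q : Matrix (Fin 3) (Fin 3) ℝ) (t : Fin 3 → ℝ)
    (hcj : 0 < cj) (X : Matrix (Fin 3) (Fin ci) ℝ) (Y : Matrix (Fin 3) (Fin cj) ℝ) :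
    (Matrix.of fun r p => rigid Q t X r p - (∑ q : Fin cj, rigid Q t Y r q) / ((cj : ℕ) : ℝ))
      = mulQ Q (Matrix.of fun r p => X r p - (∑ q : Fin cj, Y r q) / ((cj : ℕ) : ℝ)) := by
  have hc : ((cj : ℕ) : ℝ) ≠ 0 := Nat.cast_ne_zero.mpr hcj.ne'
  ext r p
  simp only [mulQ, rigid, Matrix.of_apply]
  have hmean : ∑ q : Fin cj, ((∑ s : Fin 3, Q r s * Y s q) + t r)
      = (∑ s : Fin 3, Q r s * ∑ q : Fin cj, Y s q) + (cj : ℝ) * t r := by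
    rw [Finset.sum_add_distrib, Finset.sum_const, Finset.card_univ, Fintype.card_fin,
      nsmul_eq_mul, Finset.sum_comm]
    congr 1
    exact Finset.sum_congr rfl fun s _ => (Finset.mul_sum _ _ _).symm
  rw [hmean]
  have hr : ∑ s : Fin 3, Q r s * (X s p - (∑ q : Fin cj, Y s q) / ((cj : ℕ) : ℝ))
      = (∑ s : Fin 3, Q r s * X s p)
        - (∑ s : Fin 3, Q r s * ∑ q : Fin cj, Y s q) / ((cj : ℕ) : ℝ) := by
    rw [Finset.sum_congr rfl (fun s _ => mul_sub (Q r s) _ _), Finset.sum_sub_distrib,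
      Finset.sum_div]
    congr 1
    exact Finset.sum_congr rfl fun s _ => (mul_div_assoc _ _ _).symm
  rw [hr]
  field_simp
  ring

lemma TS_mulQ {c C : ℕ} (hc : c ≤ C) (Q : Matrix (Fin 3) (Fin 3) ℝ)
    (X : Matrix (Fin 3) (Fin c) ℝ) (s : Fin C → ℝ) :
    TS hc (mulQ Q X) s = mulQ Q (TS hc X s) := by
  ext r p
  simp only [TS, mulQ, Matrix.of_apply, Finset.sum_mul]
  exact Finset.sum_congr rfl fun q _ => by ring

lemma xMsgOf_rigid {V : Type*} {d dh m' C : ℕ} {c : V → ℕ}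
    (G : GraphParams V d m' C c) (F : LayerFuns d dh m' C)
    (h : V → Fin dh → ℝ) (X : (i : V) → Matrix (Fin 3) (Fin (c i)) ℝ)
    {Q : Matrix (Fin 3) (Fin 3) ℝ} (hQ : Qᵀ * Q = 1) (t : Fin 3 → ℝ)
    (hpos : ∀ i, 0 < c i) (i j : V) :
    xMsgOf G F h (fun i => rigid Q t (X i)) i j = mulQ Q (xMsgOf G F h X i j) := by
  unfold xMsgOf
  rw [msgOf_rigid G F h X hQ t, sub_mean_rigid Q t (hpos j), TS_mulQ]

lemma xOut_rigid {V : Type*} {d dh m' C : ℕ} {c : V → ℕ}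
    (G : GraphParams V d m' C c) (F : LayerFuns d dh m' C)
    (h : V → Fin dh → ℝ) (X : (i : V) → Matrix (Fin 3) (Fin (c i)) ℝ)
    {Q : Matrix (Fin 3) (Fin 3) ℝ} (hQ : Qᵀ * Q = 1) (t : Fin 3 → ℝ)
    (hpos : ∀ i, 0 < c i) (i : V) :
    xOut G F h (fun i => rigid Q t (X i)) i = rigid Q t (xOut G F h X i) := by
  unfold xOut
  have hsum : ∑ j ∈ G.N i, xMsgOf G F h (fun i => rigid Q t (X i)) i j
      = mulQ Q (∑ j ∈ G.N i, xMsgOf G F h X i j) := by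
    rw [Finset.sum_congr rfl fun j _ => xMsgOf_rigid G F h X hQ t hpos i j]
    ext r p
    simp only [mulQ, Matrix.sum_apply, Matrix.of_apply, Finset.mul_sum]
    exact Finset.sum_comm
  rw [hsum]
  ext r p
  simp only [rigid, mulQ, Matrix.add_apply, Matrix.smul_apply, Matrix.of_apply,
    smul_eq_mul, Finset.mul_sum, mul_add, Finset.sum_add_distrib]
  have key : ∀ (a : ℝ) (M : Matrix (Fin 3) (Fin (c i)) ℝ),
      ∑ s : Fin 3, Q r s * (a * M s p) = ∑ s : Fin 3, a * (Q r s * M s p) :=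
    fun a M => Finset.sum_congr rfl fun s _ => by ring
  rw [key]
  ring

lemma encStep_equiv {cE : VE → ℕ} {cA : VA → ℕ}
    (hposE : ∀ i, 0 < cE i) (hposA : ∀ j, 0 < cA j)
    (GE : GraphParams VE d m' C cE) (GA : GraphParams VA d m' C cA)
    (eS : ιS → VE) (eP : ιS → VA)
    (FE FA : ℕ → LayerFuns d dh m' C) (l : ℕ)
    {Q₁ Q₂ : Matrix (Fin 3) (Fin 3) ℝ}
    (hQ₁ : Q₁ᵀ * Q₁ = 1) (hQ₂ : Q₂ᵀ * Q₂ = 1)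
    (t₁ t₂ : Fin 3 → ℝ)
    (st st' : EncState VE VA dh cE cA)
    (h1 : st'.hE = st.hE) (h2 : st'.hA = st.hA)
    (h3 : ∀ i, st'.XE i = rigid Q₁ t₁ (st.XE i))
    (h4 : ∀ j, st'.XA j = rigid Q₂ t₂ (st.XA j)) :
    (encStep GE GA eS eP FE FA l st').hE = (encStep GE GA eS eP FE FA l st).hE ∧
    (encStep GE GA eS eP FE FA l st').hA = (encStep GE GA eS eP FE FA l st).hA ∧
    (∀ i, (encStep GE GA eS eP FE FA l st').XE i
        = rigid Q₁ t₁ ((encStep GE GA eS eP FE FA l st).XE i)) ∧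
    (∀ j, (encStep GE GA eS eP FE FA l st').XA j
        = rigid Q₂ t₂ ((encStep GE GA eS eP FE FA l st).XA j)) := by
  have hXE : st'.XE = fun i => rigid Q₁ t₁ (st.XE i) := funext h3
  have hXA : st'.XA = fun j => rigid Q₂ t₂ (st.XA j) := funext h4
  have hA1 : hOut GA (FA l) st'.hA st'.XA = hOut GA (FA l) st.hA st.XA := by
    funext j
    rw [h2, hXA, hOut_rigid GA (FA l) st.hA st.XA hQ₂ t₂]
  have hE1 : copyToShadow eS eP st'.hE (hOut GA (FA l) st'.hA st'.XA)
      = copyToShadow eS eP st.hE (hOut GA (FA l) st.hA st.XA) := by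
    rw [h1, hA1]
  have hE2 : hOut GE (FE l)
        (copyToShadow eS eP st'.hE (hOut GA (FA l) st'.hA st'.XA)) st'.XE
      = hOut GE (FE l)
        (copyToShadow eS eP st.hE (hOut GA (FA l) st.hA st.XA)) st.XE := by
    funext i
    rw [hE1, hXE, hOut_rigid GE (FE l) _ st.XE hQ₁ t₁]
  refine ⟨?_, ?_, ?_, ?_⟩
  · exact hE2
  · show copyToNative eS eP
        (hOut GE (FE l) (copyToShadow eS eP st'.hE (hOut GA (FA l) st'.hA st'.XA)) st'.XE)
        (hOut GA (FA l) st'.hA st'.XA)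
      = copyToNative eS eP
        (hOut GE (FE l) (copyToShadow eS eP st.hE (hOut GA (FA l) st.hA st.XA)) st.XE)
        (hOut GA (FA l) st.hA st.XA)
    rw [hE2, hA1]
  · intro i
    show xOut GE (FE l) (copyToShadow eS eP st'.hE (hOut GA (FA l) st'.hA st'.XA)) st'.XE i
      = rigid Q₁ t₁
        (xOut GE (FE l) (copyToShadow eS eP st.hE (hOut GA (FA l) st.hA st.XA)) st.XE i)
    rw [hE1, hXE]
    exact xOut_rigid GE (FE l) _ st.XE hQ₁ t₁ hposE i
  · intro j
    show xOut GA (FA l) st'.hA st'.XA j = rigid Q₂ t₂ (xOut GA (FA l) st.hA st.XA j)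
    rw [h2, hXA]
    exact xOut_rigid GA (FA l) _ st.XA hQ₂ t₂ hposA j

lemma encoder_equiv {cE : VE → ℕ} {cA : VA → ℕ}
    (hposE : ∀ i, 0 < cE i) (hposA : ∀ j, 0 < cA j)
    (GE : GraphParams VE d m' C cE) (GA : GraphParams VA d m' C cA)
    (eS : ιS → VE) (eP : ιS → VA)
    (FE FA : ℕ → LayerFuns d dh m' C)
    {Q₁ Q₂ : Matrix (Fin 3) (Fin 3) ℝ}
    (hQ₁ : Q₁ᵀ * Q₁ = 1) (hQ₂ : Q₂ᵀ * Q₂ = 1)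
    (t₁ t₂ : Fin 3 → ℝ) :
    ∀ (L : ℕ) (st st' : EncState VE VA dh cE cA),
      st'.hE = st.hE → st'.hA = st.hA →
      (∀ i, st'.XE i = rigid Q₁ t₁ (st.XE i)) →
      (∀ j, st'.XA j = rigid Q₂ t₂ (st.XA j)) →
      (encoder GE GA eS eP FE FA L st').hE = (encoder GE GA eS eP FE FA L st).hE ∧
      (encoder GE GA eS eP FE FA L st').hA = (encoder GE GA eS eP FE FA L st).hA ∧
      (∀ i, (encoder GE GA eS eP FE FA L st').XE i
          = rigid Q₁ t₁ ((encoder GE GA eS eP FE FA L st).XE i)) ∧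
      (∀ j, (encoder GE GA eS eP FE FA L st').XA j
          = rigid Q₂ t₂ ((encoder GE GA eS eP FE FA L st).XA j))
  | 0, st, st', h1, h2, h3, h4 => ⟨h1, h2, h3, h4⟩
  | L + 1, st, st', h1, h2, h3, h4 => by
    obtain ⟨a, b, c', d'⟩ :=
      encStep_equiv hposE hposA GE GA eS eP FE FA L hQ₁ hQ₂ t₁ t₂ st st' h1 h2 h3 h4
    exact encoder_equiv hposE hposA GE GA eS eP FE FA hQ₁ hQ₂ t₁ t₂ L _ _ a b c' d'

/-- The alternating encoder is independently E(3)-equivariant with respect to the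
epitope-with-shadow-paratope graph and the antibody graph: transforming the input
coordinates of the two graphs by arbitrary rigid motions `(Q₁, t₁)` and `(Q₂, t₂)`
leaves all final hidden states unchanged and transforms the final coordinates of the
two graphs by `(Q₁, t₁)` and `(Q₂, t₂)`, respectively. -/
theorem encoder_independent_E3_equivariant
    [Fintype VE] [Fintype VA]
    {cE : VE → ℕ} {cA : VA → ℕ}
    (hposE : ∀ i, 0 < cE i) (hposA : ∀ j, 0 < cA j)
    (GE : GraphParams VE d m' C cE) (GA : GraphParams VA d m' C cA)
    (hNE : ∀ i, (GE.N i).Nonempty) (hNA : ∀ j, (GA.N j).Nonempty)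
    (eS : ιS → VE) (eP : ιS → VA)
    (hinjS : Function.Injective eS) (hinjP : Function.Injective eP)
    (hmatch : ∀ k, cE (eS k) = cA (eP k))
    (FE FA : ℕ → LayerFuns d dh m' C)
    (L : ℕ) (st : EncState VE VA dh cE cA)
    (Q₁ Q₂ : Matrix (Fin 3) (Fin 3) ℝ)
    (hQ₁ : Q₁ᵀ * Q₁ = 1) (hQ₂ : Q₂ᵀ * Q₂ = 1)
    (t₁ t₂ : Fin 3 → ℝ) :
    (encoder GE GA eS eP FE FA L
        ⟨st.hE, st.hA, fun i => rigid Q₁ t₁ (st.XE i), fun j => rigid Q₂ t₂ (st.XA j)⟩).hE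
      = (encoder GE GA eS eP FE FA L st).hE ∧
    (encoder GE GA eS eP FE FA L
        ⟨st.hE, st.hA, fun i => rigid Q₁ t₁ (st.XE i), fun j => rigid Q₂ t₂ (st.XA j)⟩).hA
      = (encoder GE GA eS eP FE FA L st).hA ∧
    (∀ i, (encoder GE GA eS eP FE FA L
        ⟨st.hE, st.hA, fun i => rigid Q₁ t₁ (st.XE i), fun j => rigid Q₂ t₂ (st.XA j)⟩).XE i
      = rigid Q₁ t₁ ((encoder GE GA eS eP FE FA L st).XE i)) ∧
    (∀ j, (encoder GE GA eS eP FE FA L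
        ⟨st.hE, st.hA, fun i => rigid Q₁ t₁ (st.XE i), fun j => rigid Q₂ t₂ (st.XA j)⟩).XA j
      = rigid Q₂ t₂ ((encoder GE GA eS eP FE FA L st).XA j)) := by
  exact encoder_equiv hposE hposA GE GA eS eP FE FA hQ₁ hQ₂ t₁ t₂ L st
    ⟨st.hE, st.hA, fun i => rigid Q₁ t₁ (st.XE i), fun j => rigid Q₂ t₂ (st.XA j)⟩
    rfl rfl (fun _ => rfl) (fun _ => rfl)

end
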